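/- The Dancs–He series for ln 2: (π²/2) · ∑_{m=0}^∞ (−1)^m · π^{2m} · E_{2m+1}(1) / (2m+3)! = ln 2, where E_n denotes the n-th Euler polynomial. -/

import Mathlib

open Real Nat Filter Topology

/-- The `n`-th Euler polynomial, defined (equivalently to the generating-function
definition `2 e^{xt}/(e^t+1) = ∑ E_n(x) t^n / n!`) via Bernoulli polynomials by
`E_n(x) = (2/(n+1)) (B_{n+1}(x) - 2^{n+1} B_{n+1}(x/2))`. -/
noncomputable def eulerPoly (n : ℕ) : Polynomial ℚ :=
  (2 / (n + 1 : ℚ)) • (Polynomial.bernoulli (n + 1) -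
    (2 ^ (n + 1) : ℚ) • ((Polynomial.bernoulli (n + 1)).comp
      (Polynomial.C (1 / 2) * Polynomial.X)))

noncomputable def BC (k : ℕ) : ℝ := (-1:ℝ)^(k+1) * (2*π)^(2*k) / 2 / (2*k)!

lemma eval_mapRR (k : ℕ) (x : ℚ) :
    (Polynomial.map (algebraMap ℚ ℝ) (Polynomial.bernoulli k)).eval ((x:ℝ))
      = (((Polynomial.bernoulli k).eval x : ℚ) : ℝ) := by
  rw [Polynomial.eval_map, show ((x:ℝ)) = algebraMap ℚ ℝ x from (eq_ratCast _ _).symm,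
    Polynomial.eval₂_at_apply]
  exact eq_ratCast _ _

lemma DH_hasSum_odd (k : ℕ) (hk : k ≠ 0) :
    HasSum (fun j : ℕ => 1 / (2*(j:ℝ)+1)^(2*k))
      (BC k * ((((Polynomial.bernoulli (2*k)).eval 1 : ℚ):ℝ)) / 4^k
        - BC k * ((((Polynomial.bernoulli (2*k)).eval (1/2 : ℚ) : ℚ) : ℝ))) := by
  have hZ := hasSum_one_div_nat_pow_mul_cos hk (x := 1) ⟨zero_le_one, le_refl 1⟩
  have hA := hasSum_one_div_nat_pow_mul_cos hk (x := 1/2) (by constructor <;> norm_num)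
  rw [show Polynomial.eval (1:ℝ) (Polynomial.map (algebraMap ℚ ℝ) (Polynomial.bernoulli (2*k)))
      = (((Polynomial.bernoulli (2*k)).eval 1 : ℚ):ℝ) by
    rw [← eval_mapRR]; norm_num] at hZ
  rw [show Polynomial.eval ((1:ℝ)/2) (Polynomial.map (algebraMap ℚ ℝ) (Polynomial.bernoulli (2*k)))
      = (((Polynomial.bernoulli (2*k)).eval (1/2:ℚ) : ℚ):ℝ) by
    rw [← eval_mapRR]; norm_num] at hA
  rw [show (-1:ℝ)^(k+1) * (2*π)^(2*k) / 2 / (2*k)! = BC k from rfl] at hZ hA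
  simp only [mul_one] at hZ
  simp only [show ∀ n:ℕ, 2*π*(n:ℝ) = (n:ℝ)*(2*π) from fun n => by ring,
    Real.cos_nat_mul_two_pi, mul_one] at hZ
  simp only [show ∀ n:ℕ, 2*π*(n:ℝ)*(1/2) = (n:ℝ)*π - 0 from fun n => by ring,
    Real.cos_nat_mul_pi_sub, Real.cos_zero, mul_one] at hA
  set Z : ℝ := BC k * ((((Polynomial.bernoulli (2*k)).eval 1 : ℚ):ℝ)) with hZdef
  set A : ℝ := BC k * ((((Polynomial.bernoulli (2*k)).eval (1/2:ℚ) : ℚ):ℝ)) with hAdef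
  set f : ℕ → ℝ := fun n => 1/(n:ℝ)^(2*k) * (-1:ℝ)^n with hfdef
  have hE : HasSum (fun n : ℕ => f (2*n)) (Z / 4^k) := by
    have h2 := hZ.div_const (4^k)
    have heq : (fun n : ℕ => 1/(n:ℝ)^(2*k) / 4^k) = fun n : ℕ => f (2*n) := by
      funext n
      simp only [hfdef]
      push_cast
      rw [pow_mul (-1:ℝ), neg_one_sq, one_pow, mul_one, mul_pow, div_div,
        show (2:ℝ)^(2*k) = 4^k by rw [pow_mul]; norm_num, mul_comm]
    rwa [heq] at h2
  have hOs : Summable (fun j : ℕ => f (2*j+1)) :=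
    hA.summable.comp_injective (fun a b hab => by omega)
  have hOdd : HasSum (fun j : ℕ => f (2*j+1)) (∑' j, f (2*j+1)) := hOs.hasSum
  have htot := hE.even_add_odd hOdd
  have hval : (∑' j, f (2*j+1)) = A - Z/4^k := by
    have := htot.unique hA
    linarith
  rw [hval] at hOdd
  have := hOdd.neg
  rw [neg_sub] at this
  have heq2 : (fun j : ℕ => -f (2*j+1)) = fun j : ℕ => 1 / (2*(j:ℝ)+1)^(2*k) := by
    funext j
    simp only [hfdef]
    push_cast
    rw [pow_succ, pow_mul (-1:ℝ), neg_one_sq, one_pow, one_mul]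
    ring
  rwa [heq2] at this

lemma euler_eval_one (m : ℕ) :
    ((eulerPoly (2*m+1)).eval 1 : ℚ)
      = (2/(2*(m:ℚ)+2)) * ((Polynomial.bernoulli (2*(m+1))).eval 1
          - 2^(2*m+2) * (Polynomial.bernoulli (2*(m+1))).eval (1/2)) := by
  rw [show 2*(m+1) = 2*m+1+1 by ring]
  simp only [eulerPoly, Polynomial.eval_smul, Polynomial.eval_sub, Polynomial.eval_comp,
    Polynomial.eval_mul, Polynomial.eval_C, Polynomial.eval_X, smul_eq_mul, mul_one]
  push_cast
  ring_nf

lemma fiber_m (m : ℕ) :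
    HasSum (fun j : ℕ => (1/(((m:ℝ)+1)*(2*m+3))) * (1 / (2*(j:ℝ)+1)^(2*(m+1))))
      ((π ^ 2 / 2) * ((-1 : ℝ) ^ m * π ^ (2 * m) *
        (((eulerPoly (2 * m + 1)).eval 1 : ℚ) : ℝ) / ((2 * m + 3)! : ℝ))) := by
  have h := (DH_hasSum_odd (m+1) (Nat.succ_ne_zero m)).mul_left (1/(((m:ℝ)+1)*(2*m+3)))
  convert h using 1
  · rfl
  rw [euler_eval_one]
  push_cast
  set B1 : ℝ := (((Polynomial.bernoulli (2*(m+1))).eval 1 : ℚ) : ℝ)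
  set Bh : ℝ := (((Polynomial.bernoulli (2*(m+1))).eval (1/2:ℚ) : ℚ) : ℝ)
  rw [BC]
  have hfac : ((2*m+3)! : ℝ) = (2*m+3) * ((2*(m+1))! : ℝ) := by
    rw [show 2*m+3 = (2*(m+1))+1 by ring, Nat.factorial_succ]
    push_cast; ring
  rw [hfac,
    show ((2:ℝ)*π)^(2*(m+1)) = (4^m * (π^2)^m) * (4*π^2) by
      rw [pow_mul, pow_succ, show ((2:ℝ)*π)^2 = 4*π^2 by ring, mul_pow],
    show (π:ℝ)^(2*m) = (π^2)^m by rw [pow_mul],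
    show (2:ℝ)^(2*m+2) = 4*4^m by rw [pow_add, pow_mul]; norm_num; ring,
    show (4:ℝ)^(m+1) = 4*4^m by rw [pow_succ]; ring]
  have h1 : ((2*(m+1))! : ℝ) ≠ 0 := by positivity
  have h2 : (m:ℝ)+1 ≠ 0 := by positivity
  have h3 : (2*(m:ℝ)+3) ≠ 0 := by positivity
  have h4 : (2*(m:ℝ)+2) ≠ 0 := by positivity
  have h5 : (4:ℝ)^m ≠ 0 := by positivity
  field_simp
  ring

lemma hasSum_W {x : ℝ} (h0 : 0 < x) (h1 : x < 1) :
    HasSum (fun m : ℕ => (1/(((m:ℝ)+1)*(2*m+3))) * (x^2)^(m+1))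
      (-Real.log (1-x^2) - (1/x)*(Real.log (1+x) - Real.log (1-x) - 2*x)) := by
  have hxne : x ≠ 0 := ne_of_gt h0
  have habs : |x| < 1 := by rw [abs_of_pos h0]; exact h1
  have habs2 : |x^2| < 1 := by rw [abs_of_pos (by positivity)]; nlinarith
  have hA := hasSum_pow_div_log_of_abs_lt_one habs2
  have hB := hasSum_log_sub_log_of_abs_lt_one habs
  have hB' : HasSum (fun m : ℕ => 2*(1/(2*((m:ℝ)+1)+1))*x^(2*(m+1)+1))
      (Real.log (1+x) - Real.log (1-x) - 2*x) := by
    have h := (hasSum_nat_add_iff (f := fun k : ℕ => 2*(1/(2*(k:ℝ)+1))*x^(2*k+1))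
        (g := Real.log (1+x) - Real.log (1-x) - 2*x) 1).mpr ?_
    · convert h using 2 with m
      · rfl
      push_cast
      ring_nf
    · convert hB using 1
      · rfl
      rw [Finset.sum_range_one]
      norm_num
  have combined := hA.sub (hB'.mul_left (1/x))
  have heq : (fun m : ℕ => (x^2)^(m+1)/((m:ℝ)+1) - (1/x)*(2*(1/(2*((m:ℝ)+1)+1))*x^(2*(m+1)+1)))
      = fun m : ℕ => (1/(((m:ℝ)+1)*(2*m+3))) * (x^2)^(m+1) := by
    funext m
    have hm1 : ((m:ℝ)+1) ≠ 0 := by positivity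
    have hm2 : (2*((m:ℝ)+1)+1) ≠ 0 := by positivity
    rw [show x^(2*(m+1)+1) = (x^2)^(m+1)*x by rw [pow_succ, pow_mul]]
    field_simp
    ring
  rwa [heq] at combined

noncomputable def G (j : ℕ) : ℝ :=
  2 + 2*Real.log (2*(j:ℝ)+1) - (2*(j:ℝ)+2)*Real.log (2*(j:ℝ)+2)
    + (2*(j:ℝ))*Real.log (2*(j:ℝ))

lemma fiber_j_pos (j : ℕ) (hj : j ≠ 0) :
    HasSum (fun m : ℕ => (1/(((m:ℝ)+1)*(2*m+3))) * (1/(2*(j:ℝ)+1)^(2*(m+1)))) (G j) := by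
  have hj1 : (1:ℝ) ≤ (j:ℝ) := by exact_mod_cast Nat.one_le_iff_ne_zero.mpr hj
  set n : ℝ := 2*(j:ℝ)+1 with hn
  have hn1 : 1 < n := by simp only [hn]; linarith
  have hn0 : (0:ℝ) < n := by linarith
  have hx0 : 0 < 1/n := by positivity
  have hx1 : 1/n < 1 := by rw [div_lt_one hn0]; linarith
  have h := hasSum_W hx0 hx1
  have heq : (fun m : ℕ => (1/(((m:ℝ)+1)*(2*m+3))) * ((1/n)^2)^(m+1))
      = fun m : ℕ => (1/(((m:ℝ)+1)*(2*m+3))) * (1/(2*(j:ℝ)+1)^(2*(m+1))) := by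
    funext m
    rw [← hn, ← one_div_pow, ← pow_mul]
  rw [heq] at h
  convert h using 1
  -- value equality
  have hnm1 : (0:ℝ) < n - 1 := by linarith
  have e1 : 1 - (1/n)^2 = ((n-1)*(n+1))/(n^2) := by field_simp; ring
  have e2 : 1 + (1/n) = (n+1)/n := by field_simp
  have e3 : 1 - (1/n) = (n-1)/n := by field_simp
  rw [e1, e2, e3, Real.log_div (by positivity) (by positivity),
    Real.log_div (by positivity) (ne_of_gt hn0), Real.log_div (by positivity) (ne_of_gt hn0),
    Real.log_mul (by positivity) (by positivity), Real.log_pow, one_div_one_div]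
  have hG : G j = 2 + 2*Real.log n - (n+1)*Real.log (n+1) + (n-1)*Real.log (n-1) := by
    rw [G, ← hn, show 2*(j:ℝ)+2 = n+1 by rw [hn]; ring, show 2*(j:ℝ) = n-1 by rw [hn]; ring]
  rw [hG]
  field_simp
  ring
lemma fiber_j_zero :
    HasSum (fun m : ℕ => (1/(((m:ℝ)+1)*(2*m+3)))) (2 - 2*Real.log 2) := by
  set a : ℕ → ℝ := fun m => 1/(((m:ℝ)+1)*(2*m+3)) with ha
  have hasummable : Summable a := by
    have h2 : Summable (fun n : ℕ => 1/((n:ℝ))^2) := by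
      simpa using Real.summable_one_div_nat_pow.mpr one_lt_two
    have h3 : Summable (fun n : ℕ => 1/((n:ℝ)+1)^2) := by
      have := (summable_nat_add_iff (f := fun n : ℕ => 1/((n:ℝ))^2) 1).mpr h2
      convert this using 2 with m
      · rfl
      push_cast
      ring
    refine Summable.of_nonneg_of_le (fun m => by positivity) (fun m => ?_) h3
    rw [ha]
    have hm : (0:ℝ) < (m:ℝ)+1 := by positivity
    apply one_div_le_one_div_of_le (by positivity)
    nlinarith
  have hS0 := hasummable.hasSum
  have habel := Real.tendsto_tsum_powerSeries_nhdsWithin_lt hS0.tendsto_sum_nat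
  -- the sequence t i = 1 - 1/(i+2)
  set t : ℕ → ℝ := fun i => 1 - 1/((i:ℝ)+2) with ht
  have ht0 : ∀ i, 0 < t i := by
    intro i
    have : 1/((i:ℝ)+2) ≤ 1/2 := by
      apply one_div_le_one_div_of_le (by norm_num); push_cast; linarith [Nat.cast_nonneg (α := ℝ) i]
    simp only [ht]; linarith
  have ht1 : ∀ i, t i < 1 := by
    intro i
    have : 0 < 1/((i:ℝ)+2) := by positivity
    simp only [ht]; linarith
  have htt : Tendsto t atTop (𝓝 1) := by
    rw [show (1:ℝ) = 1 - 0 by ring]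
    apply Tendsto.const_sub
    apply Tendsto.comp tendsto_inv_atTop_zero ?_ |>.congr (fun i => by rw [Function.comp, one_div])
    exact tendsto_atTop_add_const_right atTop 2 tendsto_natCast_atTop_atTop
  have hu : Tendsto (fun i => (t i)^2) atTop (𝓝[<] 1) := by
    rw [tendsto_nhdsWithin_iff]
    constructor
    · have := (htt.mul htt)
      simpa [pow_two] using this
    · filter_upwards with i
      have h0 := ht0 i; have h1 := ht1 i
      simp only [Set.mem_Iio]
      nlinarith
  have hcomp := habel.comp hu
  -- rewrite the composed function via hasSum_W
  have hfun : ∀ i, (∑' m, a m * ((t i)^2)^m)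
      = (-Real.log (1-(t i)^2) - (1/(t i))*(Real.log (1+(t i)) - Real.log (1-(t i)) - 2*(t i)))/((t i)^2) := by
    intro i
    have hW := hasSum_W (ht0 i) (ht1 i)
    have hW2 := hW.div_const ((t i)^2)
    have heq : (fun m : ℕ => ((1/(((m:ℝ)+1)*(2*m+3))) * ((t i)^2)^(m+1))/((t i)^2))
        = fun m => a m * ((t i)^2)^m := by
      funext m
      have : (t i) ≠ 0 := ne_of_gt (ht0 i)
      rw [pow_succ]
      simp only [ha]
      field_simp
    rw [heq] at hW2
    exact hW2.tsum_eq
  rw [show (fun x => ∑' (n : ℕ), a n * x ^ n) ∘ (fun i => (t i)^2)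
      = fun i => ∑' (m : ℕ), a m * ((t i)^2)^m from rfl] at hcomp
  simp only [hfun] at hcomp
  -- now compute the limit of the explicit expression
  have hlim : Tendsto (fun i => (-Real.log (1-(t i)^2) - (1/(t i))*(Real.log (1+(t i)) - Real.log (1-(t i)) - 2*(t i)))/((t i)^2))
      atTop (𝓝 (2 - 2*Real.log 2)) := by
    have key : ∀ i, (-Real.log (1-(t i)^2) - (1/(t i))*(Real.log (1+(t i)) - Real.log (1-(t i)) - 2*(t i)))/((t i)^2)
        = ((1 - t i)*Real.log (1 - t i) * (1/(t i)) - (1+1/(t i))*Real.log (1+(t i)) + 2)/((t i)^2) := by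
      intro i
      have h0 := ht0 i; have h1 := ht1 i
      have e1 : 1 - (t i)^2 = (1 - t i)*(1 + t i) := by ring
      rw [e1, Real.log_mul (by linarith) (by linarith)]
      have : t i ≠ 0 := ne_of_gt h0
      field_simp
      ring
    simp only [key]
    have hts : Tendsto (fun i => 1 - t i) atTop (𝓝 0) := by
      have := htt.const_sub 1
      simpa using this
    have l1 : Tendsto (fun i => (1 - t i)*Real.log (1 - t i)) atTop (𝓝 0) := by
      have := (Real.continuous_mul_log.tendsto 0).comp hts
      simpa [Function.comp_def] using this
    have linv : Tendsto (fun i => 1/(t i)) atTop (𝓝 1) := by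
      have := htt.inv₀ one_ne_zero
      simpa [one_div] using this
    have l2 : Tendsto (fun i => 1 + t i) atTop (𝓝 2) := by
      have h := htt.const_add 1
      rwa [show (1:ℝ)+1 = 2 by norm_num] at h
    have l3 : Tendsto (fun i => Real.log (1 + t i)) atTop (𝓝 (Real.log 2)) :=
      ((Real.continuousAt_log two_ne_zero).tendsto).comp l2
    have l4 : Tendsto (fun i => (t i)^2) atTop (𝓝 1) := by
      have := htt.mul htt
      simpa [pow_two] using this
    have lnum : Tendsto (fun i => (1 - t i)*Real.log (1 - t i) * (1/(t i)) - (1+1/(t i))*Real.log (1+(t i)) + 2)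
        atTop (𝓝 (0*1 - (1+1)*Real.log 2 + 2)) := by
      exact (((l1.mul linv).sub ((linv.const_add 1).mul l3)).add_const 2)
    have := lnum.div l4 one_ne_zero
    convert this using 2
    norm_num
    ring
  have : (∑' m, a m) = 2 - 2*Real.log 2 := tendsto_nhds_unique hcomp hlim
  rwa [this] at hS0

lemma sum_G (K : ℕ) : ∑ j ∈ Finset.range K, G j
    = 2*K + 2*Real.log ((2*K)! : ℝ) - 2*K*Real.log 2 - 2*Real.log (K ! : ℝ)
      - 2*K*Real.log (2*(K:ℝ)) := by
  induction K with
  | zero => simp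
  | succ K ih =>
    rw [Finset.sum_range_succ, ih, G]
    have f1 : ((2*(K+1))! : ℝ) = (2*(K:ℝ)+2)*((2*(K:ℝ))+1)*((2*K)! : ℝ) := by
      rw [show 2*(K+1) = (2*K+1)+1 by ring, Nat.factorial_succ, Nat.factorial_succ]
      push_cast; ring
    have f2 : (((K+1))! : ℝ) = ((K:ℝ)+1)*(K ! : ℝ) := by
      rw [Nat.factorial_succ]; push_cast; ring
    rw [f1, f2]
    have hK1 : ((K:ℝ)+1) ≠ 0 := by positivity
    have hKf : ((K)! : ℝ) ≠ 0 := by positivity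
    have h2Kf : (((2*K))! : ℝ) ≠ 0 := by positivity
    have h1 : (2*(K:ℝ)+2) ≠ 0 := by positivity
    have h2 : (2*(K:ℝ)+1) ≠ 0 := by positivity
    rw [Real.log_mul (by positivity) h2Kf, Real.log_mul h1 h2,
      Real.log_mul hK1 hKf,
      show 2*(K:ℝ)+2 = 2*((K:ℝ)+1) by ring, Real.log_mul two_ne_zero hK1,
      show (2:ℝ)*(↑(K+1):ℝ) = 2*((K:ℝ)+1) by push_cast; ring, Real.log_mul two_ne_zero hK1]
    push_cast
    ring
lemma tendsto_sum_G : Tendsto (fun K => ∑ j ∈ Finset.range K, G j) atTop (𝓝 (Real.log 2)) := by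
  have hps : ∀ K : ℕ, 1 ≤ K → ∑ j ∈ Finset.range K, G j
      = Real.log 2 + 2*(Real.log (Stirling.stirlingSeq (2*K)) - Real.log (Stirling.stirlingSeq K)) := by
    intro K hK
    have hK0 : ((K:ℝ)) ≠ 0 := by
      have : (0:ℝ) < (K:ℝ) := by exact_mod_cast Nat.cast_pos.mpr (by omega)
      exact this.ne'
    have e : ∀ n : ℕ, n ≠ 0 → Real.log ((n:ℝ)/rexp 1) = Real.log (n:ℝ) - 1 := fun n hn => by
      rw [Real.log_div (Nat.cast_ne_zero.mpr hn) (exp_ne_zero 1), Real.log_exp]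
    rw [sum_G, Stirling.log_stirlingSeq_formula, Stirling.log_stirlingSeq_formula,
      e K (by omega), e (2*K) (by omega)]
    push_cast
    rw [show (2:ℝ)*(2*(K:ℝ)) = 2*(2*(K:ℝ)) by ring,
      Real.log_mul (two_ne_zero) (by positivity : (2*(K:ℝ)) ≠ 0),
      Real.log_mul (two_ne_zero) hK0]
    ring
  have h2n : Tendsto (fun K : ℕ => 2*K) atTop atTop :=
    Filter.tendsto_atTop_atTop.mpr fun b => ⟨b, fun a ha => by omega⟩
  have hs := Stirling.tendsto_stirlingSeq_sqrt_pi
  have hπ : (0:ℝ) < √π := Real.sqrt_pos.mpr Real.pi_pos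
  have hlog : Tendsto (fun K : ℕ => Real.log (Stirling.stirlingSeq K)) atTop (𝓝 (Real.log (√π))) :=
    ((Real.continuousAt_log hπ.ne').tendsto).comp hs
  have hlog2 : Tendsto (fun K : ℕ => Real.log (Stirling.stirlingSeq (2*K))) atTop (𝓝 (Real.log (√π))) :=
    hlog.comp h2n
  have hfin : Tendsto (fun K : ℕ => Real.log 2 + 2*(Real.log (Stirling.stirlingSeq (2*K)) - Real.log (Stirling.stirlingSeq K))) atTop (𝓝 (Real.log 2)) := by
    have := ((hlog2.sub hlog).const_mul 2).const_add (Real.log 2)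
    simpa using this
  exact Tendsto.congr' (by
    filter_upwards [eventually_ge_atTop 1] with K hK using (hps K hK).symm) hfin

/-- Dancs–He series for `ln 2`:
`(π²/2) ∑_{m=0}^∞ (-1)^m π^{2m} E_{2m+1}(1) / (2m+3)! = ln 2`. -/
theorem dancs_he_series_log_two :
    HasSum (fun m : ℕ =>
      (π ^ 2 / 2) * ((-1 : ℝ) ^ m * π ^ (2 * m) *
        (((eulerPoly (2 * m + 1)).eval 1 : ℚ) : ℝ) / ((2 * m + 3)! : ℝ)))
      (Real.log 2) := by
  set F : ℕ × ℕ → ℝ := fun p =>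
    (1/(((p.1:ℝ)+1)*(2*p.1+3))) * (1/(2*(p.2:ℝ)+1)^(2*(p.1+1))) with hF
  set T : ℕ → ℝ := fun m => (π ^ 2 / 2) * ((-1 : ℝ) ^ m * π ^ (2 * m) *
        (((eulerPoly (2 * m + 1)).eval 1 : ℚ) : ℝ) / ((2 * m + 3)! : ℝ)) with hT
  have hm : ∀ m, HasSum (fun j => F (m, j)) (T m) := fun m => fiber_m m
  have hj : ∀ j, HasSum (fun m => F (m, j)) (G j) := by
    intro j
    rcases Nat.eq_zero_or_pos j with rfl | hjpos
    · have h0 := fiber_j_zero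
      have hG0 : G 0 = 2 - 2*Real.log 2 := by
        simp [G]
      rw [hG0]
      have heq : (fun m : ℕ => (1/(((m:ℝ)+1)*(2*m+3)))) = fun m => F (m, 0) := by
        funext m
        simp [hF]
      rwa [heq] at h0
    · exact fiber_j_pos j (by omega)
  -- summability of T
  have hoddsummable : ∀ k : ℕ, k ≠ 0 → Summable (fun j : ℕ => 1/(2*(j:ℝ)+1)^(2*k)) :=
    fun k hk => (DH_hasSum_odd k hk).summable
  have hS1 : Summable (fun j : ℕ => 1/(2*(j:ℝ)+1)^(2*1)) := hoddsummable 1 one_ne_zero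
  set S1 : ℝ := ∑' j : ℕ, 1/(2*(j:ℝ)+1)^(2*1) with hS1def
  have hTsummable : Summable T := by
    have hc : Summable (fun m : ℕ => (1/(((m:ℝ)+1)*(2*m+3))) * S1) :=
      fiber_j_zero.summable.mul_right S1
    refine Summable.of_nonneg_of_le (fun m => ?_) (fun m => ?_) hc
    · rw [← (hm m).tsum_eq]
      exact tsum_nonneg (fun j => by positivity)
    · rw [← (hm m).tsum_eq]
      have hle : ∀ j : ℕ, F (m, j) ≤ (1/(((m:ℝ)+1)*(2*m+3))) * (1/(2*(j:ℝ)+1)^(2*1)) := by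
        intro j
        have hb : (1:ℝ) ≤ 2*(j:ℝ)+1 := by
          have : (0:ℝ) ≤ (j:ℝ) := Nat.cast_nonneg j
          linarith
        have hpow : (2*(j:ℝ)+1)^(2*1) ≤ (2*(j:ℝ)+1)^(2*(m+1)) :=
          pow_le_pow_right₀ hb (by omega)
        have h1 : (0:ℝ) < (2*(j:ℝ)+1)^(2*1) := by positivity
        have hinv := one_div_le_one_div_of_le h1 hpow
        have hc0 : (0:ℝ) ≤ 1/(((m:ℝ)+1)*(2*m+3)) := by positivity
        exact mul_le_mul_of_nonneg_left hinv hc0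
      calc ∑' j, F (m, j) ≤ ∑' j : ℕ, (1/(((m:ℝ)+1)*(2*m+3))) * (1/(2*(j:ℝ)+1)^(2*1)) := by
            refine Summable.tsum_le_tsum hle (hm m).summable ?_
            exact (hS1.mul_left _)
        _ = (1/(((m:ℝ)+1)*(2*m+3))) * S1 := by rw [tsum_mul_left]
  have hFnonneg : (0 : ℕ × ℕ → ℝ) ≤ F := fun p => by positivity
  have hFsummable : Summable F := by
    refine (summable_prod_of_nonneg hFnonneg).mpr ⟨fun m => (hm m).summable, ?_⟩
    have : (fun m => ∑' j, F (m, j)) = T := funext fun m => (hm m).tsum_eq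
    rw [this]
    exact hTsummable
  have hTsum : HasSum T (∑' p : ℕ × ℕ, F p) := hFsummable.hasSum.prod_fiberwise hm
  have hGsum : HasSum G (∑' p : ℕ × ℕ, F p.swap) :=
    hFsummable.prod_symm.hasSum.prod_fiberwise (fun j => hj j)
  have hswap : (∑' p : ℕ × ℕ, F p.swap) = ∑' p : ℕ × ℕ, F p :=
    (Equiv.prodComm ℕ ℕ).tsum_eq F
  rw [hswap] at hGsum
  have hval : (∑' p : ℕ × ℕ, F p) = Real.log 2 :=
    tendsto_nhds_unique hGsum.tendsto_sum_nat tendsto_sum_G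
  rw [hval] at hTsum
  exact hTsum
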